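/- Set-theoretic Π-construction commutes with taking member setoids: for every A : ZFSet and every family B : {x : ZFSet // x ∈ A} → ZFSet, there exists P : ZFSet such that for all f : ZFSet, f ∈ P ↔ ((∀ z ∈ f, ∃ (a : {x : ZFSet // x ∈ A}) (b : ZFSet), b ∈ B a ∧ z = ZFSet.pair a b) ∧ ∀ a : {x : ZFSet // x ∈ A}, ∃! b : ZFSet, b ∈ B a ∧ ZFSet.pair a b ∈ f); consequently there is an equivalence of types {f : ZFSet // f ∈ P} ≃ (∀ a : {x : ZFSet // x ∈ A}, {y : ZFSet // y ∈ B a}). -/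

import Mathlib

universe u

open Classical in
/-- The set-theoretic Π-construction commutes with taking member setoids:
there is a set `P` of graphs of dependent functions picking for each `a ∈ A`
an element of `B a`, and its members form a type equivalent to the
corresponding Π-type. -/
theorem piV_members (A : ZFSet.{u}) (B : {x : ZFSet.{u} // x ∈ A} → ZFSet.{u}) :
    ∃ P : ZFSet.{u},
      (∀ f : ZFSet.{u}, f ∈ P ↔
        ((∀ z ∈ f, ∃ (a : {x : ZFSet.{u} // x ∈ A}) (b : ZFSet.{u}),
            b ∈ B a ∧ z = ZFSet.pair a.1 b) ∧
          ∀ a : {x : ZFSet.{u} // x ∈ A},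
            ∃! b : ZFSet.{u}, b ∈ B a ∧ ZFSet.pair a.1 b ∈ f)) ∧
      Nonempty ({f : ZFSet.{u} // f ∈ P} ≃
        (∀ a : {x : ZFSet.{u} // x ∈ A}, {y : ZFSet.{u} // y ∈ B a})) := by
  classical
  letI : ∀ g : ZFSet.{u} → ZFSet.{u}, ZFSet.Definable₁ g := fun g =>
    Classical.allZFSetDefinable _
  -- union of all the `B a`
  set F : ZFSet.{u} → ZFSet.{u} :=
    fun x => if h : x ∈ A then B ⟨x, h⟩ else ∅ with hF
  set U : ZFSet.{u} := ZFSet.sUnion (ZFSet.image F A) with hU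
  have hBU : ∀ (a : {x : ZFSet.{u} // x ∈ A}) {b : ZFSet.{u}}, b ∈ B a → b ∈ U := by
    intro a b hb
    refine ZFSet.mem_sUnion.2 ⟨B a, ?_, hb⟩
    have : F a.1 ∈ ZFSet.image F A := ZFSet.image.mk F A a.2
    simpa [hF, a.2] using this
  set pred : ZFSet.{u} → Prop := fun f =>
    (∀ z ∈ f, ∃ (a : {x : ZFSet.{u} // x ∈ A}) (b : ZFSet.{u}),
        b ∈ B a ∧ z = ZFSet.pair a.1 b) ∧
      ∀ a : {x : ZFSet.{u} // x ∈ A},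
        ∃! b : ZFSet.{u}, b ∈ B a ∧ ZFSet.pair a.1 b ∈ f with hpred
  refine ⟨ZFSet.sep pred (ZFSet.powerset (ZFSet.prod A U)), ?_, ?_⟩
  · intro f
    rw [ZFSet.mem_sep]
    constructor
    · rintro ⟨-, h⟩; exact h
    · intro h
      refine ⟨ZFSet.mem_powerset.2 ?_, h⟩
      intro z hz
      obtain ⟨a, b, hb, rfl⟩ := h.1 z hz
      exact ZFSet.pair_mem_prod.2 ⟨a.2, hBU a hb⟩
  · -- the equivalence
    set P := ZFSet.sep pred (ZFSet.powerset (ZFSet.prod A U)) with hP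
    have memP : ∀ f : ZFSet.{u}, f ∈ P → pred f := fun f hf => (ZFSet.mem_sep.1 hf).2
    -- forward map
    let toFun : ∀ f : {f : ZFSet.{u} // f ∈ P},
        ∀ a : {x : ZFSet.{u} // x ∈ A}, {y : ZFSet.{u} // y ∈ B a} := fun f a =>
      ⟨choose ((memP f.1 f.2).2 a).exists, (choose_spec ((memP f.1 f.2).2 a).exists).1⟩
    have toFun_mem : ∀ (f : {f : ZFSet.{u} // f ∈ P}) (a : {x : ZFSet.{u} // x ∈ A}),
        ZFSet.pair a.1 (toFun f a).1 ∈ f.1 := fun f a =>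
      (choose_spec ((memP f.1 f.2).2 a).exists).2
    refine ⟨Equiv.ofBijective toFun ⟨?_, ?_⟩⟩
    · -- injective
      intro f₁ f₂ hff
      ext1
      apply ZFSet.ext
      intro z
      have key : ∀ g₁ g₂ : {f : ZFSet.{u} // f ∈ P},
          (toFun g₁ = toFun g₂) → z ∈ g₁.1 → z ∈ g₂.1 := by
        intro g₁ g₂ hg hz
        obtain ⟨a, b, hb, rfl⟩ := (memP g₁.1 g₁.2).1 z hz
        have hb1 : b = (toFun g₁ a).1 :=
          ((memP g₁.1 g₁.2).2 a).unique ⟨hb, hz⟩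
            ⟨(toFun g₁ a).2, toFun_mem g₁ a⟩
        rw [hb1, hg]
        exact toFun_mem g₂ a
      exact ⟨key f₁ f₂ hff, key f₂ f₁ hff.symm⟩
    · -- surjective
      intro g
      set G : ZFSet.{u} → ZFSet.{u} :=
        fun x => if h : x ∈ A then ZFSet.pair x (g ⟨x, h⟩).1 else ∅ with hG
      set f : ZFSet.{u} := ZFSet.image G A with hf
      have memf : ∀ z : ZFSet.{u}, z ∈ f ↔
          ∃ a : {x : ZFSet.{u} // x ∈ A}, z = ZFSet.pair a.1 (g a).1 := by
        intro z
        rw [hf, ZFSet.mem_image]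
        constructor
        · rintro ⟨x, hx, rfl⟩
          exact ⟨⟨x, hx⟩, by simp [hG, hx]⟩
        · rintro ⟨a, rfl⟩
          exact ⟨a.1, a.2, by simp [hG, a.2]⟩
      have hfpred : pred f := by
        constructor
        · intro z hz
          obtain ⟨a, rfl⟩ := (memf z).1 hz
          exact ⟨a, (g a).1, (g a).2, rfl⟩
        · intro a
          refine ⟨(g a).1, ⟨(g a).2, (memf _).2 ⟨a, rfl⟩⟩, ?_⟩
          rintro b ⟨hb, hbf⟩
          obtain ⟨a', ha'⟩ := (memf _).1 hbf
          obtain ⟨h1, h2⟩ := ZFSet.pair_injective ha'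
          have : a' = a := Subtype.ext h1.symm
          rw [h2, this]
      have hfP : f ∈ P := by
        rw [hP, ZFSet.mem_sep]
        refine ⟨ZFSet.mem_powerset.2 ?_, hfpred⟩
        intro z hz
        obtain ⟨a, rfl⟩ := (memf z).1 hz
        exact ZFSet.pair_mem_prod.2 ⟨a.2, hBU a (g a).2⟩
      refine ⟨⟨f, hfP⟩, ?_⟩
      funext a
      have := ((memP f hfP).2 a).unique
        ⟨(toFun ⟨f, hfP⟩ a).2, toFun_mem ⟨f, hfP⟩ a⟩
        ⟨(g a).2, (memf _).2 ⟨a, rfl⟩⟩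
      exact Subtype.ext this
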